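/- The image of C under f_1 is f_1(C) = {(x,y,z) ∈ C : z ≤ 1/2 + (x_1 + ⋯ + x_{p−1})/2}. Consequently, writing E = {(x,y,z) ∈ C : z ≥ 1/2 + (x_1 + ⋯ + x_{p−1})/2}, one has C = f_1(C) ∪ E and f_1(C) ∩ E = {(x,y,z) ∈ C : z = 1/2 + (x_1 + ⋯ + x_{p−1})/2}. -/
import Mathlib


open Set

/-- The set `C = Δ^{p-1} × [0,1]^{q-1} × [0,1] ⊆ ℝ^{p-1} × ℝ^{q-1} × ℝ`. -/
def Cset (p q : ℕ) : Set ((Fin (p - 1) → ℝ) × (Fin (q - 1) → ℝ) × ℝ) :=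
  {v | (∀ i, 0 ≤ v.1 i) ∧ (∑ i, v.1 i) ≤ 1 ∧ (∀ j, v.2.1 j ∈ Icc (0 : ℝ) 1) ∧
    v.2.2 ∈ Icc (0 : ℝ) 1}

/-- The map `f_t(x,y,z) = (x, y, z(1 + (x₁ + ⋯ + x_{p-1} - 1)t/2))`. -/
noncomputable def fmap (p q : ℕ) (t : ℝ)
    (v : (Fin (p - 1) → ℝ) × (Fin (q - 1) → ℝ) × ℝ) :
    (Fin (p - 1) → ℝ) × (Fin (q - 1) → ℝ) × ℝ :=
  (v.1, v.2.1, v.2.2 * (1 + ((∑ i, v.1 i) - 1) * t / 2))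

/-- `f₁(C) = {(x,y,z) ∈ C : z ≤ 1/2 + (x₁+⋯+x_{p-1})/2}`; with
`E = {(x,y,z) ∈ C : z ≥ 1/2 + (x₁+⋯+x_{p-1})/2}` we get `C = f₁(C) ∪ E` and
`f₁(C) ∩ E = {(x,y,z) ∈ C : z = 1/2 + (x₁+⋯+x_{p-1})/2}`. -/
theorem fmap_one_image (p q : ℕ) (hp : 1 ≤ p) (hq : 1 ≤ q) :
    (fmap p q 1 '' Cset p q =
      {v ∈ Cset p q | v.2.2 ≤ 1 / 2 + (∑ i, v.1 i) / 2}) ∧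
    (Cset p q =
      fmap p q 1 '' Cset p q ∪ {v ∈ Cset p q | 1 / 2 + (∑ i, v.1 i) / 2 ≤ v.2.2}) ∧
    (fmap p q 1 '' Cset p q ∩ {v ∈ Cset p q | 1 / 2 + (∑ i, v.1 i) / 2 ≤ v.2.2} =
      {v ∈ Cset p q | v.2.2 = 1 / 2 + (∑ i, v.1 i) / 2}) := by
  have himg : fmap p q 1 '' Cset p q =
      {v ∈ Cset p q | v.2.2 ≤ 1 / 2 + (∑ i, v.1 i) / 2} := by
    ext w
    constructor
    · rintro ⟨⟨x, y, z'⟩, ⟨hx, hs, hy, hz0, hz1⟩, rfl⟩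
      simp only [fmap, Cset, mem_setOf_eq, mem_Icc]
      have hs0 : (0:ℝ) ≤ ∑ i, x i := Finset.sum_nonneg fun i _ => hx i
      have hc0 : (0:ℝ) ≤ 1 + ((∑ i, x i) - 1) * 1 / 2 := by linarith
      refine ⟨⟨hx, hs, hy, mul_nonneg hz0 hc0, ?_⟩, ?_⟩
      · calc z' * (1 + ((∑ i, x i) - 1) * 1 / 2) ≤ 1 * 1 := by
              apply mul_le_mul hz1 (by linarith) hc0 one_pos.le
          _ = 1 := one_mul 1
      · calc z' * (1 + ((∑ i, x i) - 1) * 1 / 2)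
            ≤ 1 * (1 + ((∑ i, x i) - 1) * 1 / 2) := by
              apply mul_le_mul_of_nonneg_right hz1 hc0
          _ = 1 / 2 + (∑ i, x i) / 2 := by ring
    · obtain ⟨x, y, z⟩ := w
      rintro ⟨⟨hx, hs, hy, hz0, hz1⟩, hle⟩
      have hs0 : (0:ℝ) ≤ ∑ i, x i := Finset.sum_nonneg fun i _ => hx i
      set c : ℝ := 1 + ((∑ i, x i) - 1) * 1 / 2 with hc
      have hcpos : 0 < c := by rw [hc]; linarith
      have hcval : c = 1 / 2 + (∑ i, x i) / 2 := by rw [hc]; ring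
      refine ⟨(x, y, z / c), ⟨hx, hs, hy, div_nonneg hz0 hcpos.le, ?_⟩, ?_⟩
      · rw [div_le_one hcpos]; rw [hcval]; linarith
      · simp only [fmap]
        rw [← hc, div_mul_cancel₀ _ hcpos.ne']
  refine ⟨himg, ?_, ?_⟩
  · rw [himg]
    ext ⟨x, y, z⟩
    constructor
    · intro hv
      rcases le_total z (1 / 2 + (∑ i, x i) / 2) with h | h
      · exact Or.inl ⟨hv, h⟩
      · exact Or.inr ⟨hv, h⟩
    · rintro (⟨hv, _⟩ | ⟨hv, _⟩) <;> exact hv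
  · rw [himg]
    ext ⟨x, y, z⟩
    constructor
    · rintro ⟨⟨hv, h1⟩, _, h2⟩
      exact ⟨hv, le_antisymm h1 h2⟩
    · rintro ⟨hv, h⟩
      exact ⟨⟨hv, h.le⟩, hv, h.ge⟩
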